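/- Suppose I is an open interval of real numbers and V is a subgroup of Homeo⁺(I) that acts freely on I. Then the binary relation ≺ on V defined by φ ≺ ψ iff φ(x) < ψ(x) for all x ∈ I is a linear order on V that is left and right invariant under composition and Archimedean; consequently, V is abelian. -/

import Mathlib

theorem Equiv.Perm.apply_inv_self {α : Type*} (f : Equiv.Perm α) (x : α) : f (f⁻¹ x) = x :=
  Equiv.apply_symm_apply f x

theorem Equiv.Perm.inv_apply_self {α : Type*} (f : Equiv.Perm α) (x : α) : f⁻¹ (f x) = x :=
  Equiv.symm_apply_apply f x

private lemma permInv_strictMono {I : Set ℝ} (g : Equiv.Perm I) (hg : StrictMono ⇑g) :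
    StrictMono ⇑g⁻¹ := by
  intro x y h
  have h2 := hg.lt_iff_lt (a := g⁻¹ x) (b := g⁻¹ y)
  rw [Equiv.Perm.apply_inv_self, Equiv.Perm.apply_inv_self] at h2
  exact h2.mp h

private lemma fix_of_cross {I : Set ℝ} (hIconn : I.OrdConnected) (g : Equiv.Perm I)
    (hg : StrictMono ⇑g) (a b : I) (hab : a < b) (ha : a < g a) (hb : g b < b) :
    ∃ s : I, g s = s := by
  classical
  set A : Set ℝ :=
    {x : ℝ | ∃ hx : x ∈ I, (a : ℝ) ≤ x ∧ x ≤ (b : ℝ) ∧ (⟨x, hx⟩ : I) < g ⟨x, hx⟩} with hAdef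
  have haA : (a : ℝ) ∈ A := ⟨a.2, le_rfl, Subtype.coe_le_coe.mpr hab.le, ha⟩
  have hbdd : BddAbove A := ⟨(b : ℝ), fun x hx => hx.2.2.1⟩
  set s : ℝ := sSup A with hs
  have has : (a : ℝ) ≤ s := le_csSup hbdd haA
  have hsb : s ≤ (b : ℝ) := csSup_le ⟨_, haA⟩ (fun x hx => hx.2.2.1)
  have hsI : s ∈ I := hIconn.out a.2 b.2 ⟨has, hsb⟩
  set S : I := ⟨s, hsI⟩ with hSdef
  have hub : ∀ x ∈ A, x ≤ ((g S : I) : ℝ) := by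
    rintro x ⟨hxI, hax, hxb, hlt⟩
    have h1 : (⟨x, hxI⟩ : I) ≤ S := Subtype.mk_le_mk.mpr (le_csSup hbdd ⟨hxI, hax, hxb, hlt⟩)
    have h2 : g ⟨x, hxI⟩ ≤ g S := hg.monotone h1
    exact le_trans (le_of_lt (Subtype.coe_lt_coe.mpr hlt)) (Subtype.coe_le_coe.mpr h2)
  have hsle : s ≤ ((g S : I) : ℝ) := csSup_le ⟨_, haA⟩ hub
  have hSle : S ≤ g S := hsle
  refine ⟨S, ?_⟩
  rcases lt_or_eq_of_le hSle with hlt | heq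
  · exfalso
    rcases le_or_gt ((g S : I) : ℝ) (b : ℝ) with hle | hgt
    · have hmem : ((g S : I) : ℝ) ∈ A :=
        ⟨(g S).2, le_trans has hsle, hle, hg hlt⟩
      have h3 := le_csSup hbdd hmem
      exact absurd h3 (not_le.mpr (Subtype.coe_lt_coe.mpr hlt))
    · have hSb : S ≤ b := hsb
      have h4 : g S ≤ g b := hg.monotone hSb
      have h5 : ((g S : I) : ℝ) < ((g S : I) : ℝ) :=
        lt_trans (lt_of_le_of_lt (Subtype.coe_le_coe.mpr h4) (Subtype.coe_lt_coe.mpr hb)) hgt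
      exact lt_irrefl _ h5
  · exact heq.symm

/-- If `I` is an open interval of reals (open, order-connected, nonempty subset of `ℝ`) and
`V` is a subgroup of `Homeo⁺(I)` (modelled as a subgroup of `Equiv.Perm I` consisting of
strictly monotone permutations) acting freely on `I`, then the relation
`φ ≺ ψ ↔ ∀ x ∈ I, φ x < ψ x` is a strict linear order on `V` (irreflexive, transitive,
trichotomous on `V`), is left and right invariant under composition, and is Archimedean;
consequently `V` is abelian. -/
theorem stmt_8 (I : Set ℝ) (hIopen : IsOpen I) (hIconn : I.OrdConnected) (hIne : I.Nonempty)
    (V : Subgroup (Equiv.Perm I))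
    (hmono : ∀ φ ∈ V, StrictMono (⇑φ))
    (hfree : ∀ φ ∈ V, φ ≠ 1 → ∀ x : I, φ x ≠ x) :
    -- irreflexive
    (∀ φ ∈ V, ¬ ∀ x : I, φ x < φ x) ∧
    -- transitive
    (∀ φ ∈ V, ∀ ψ ∈ V, ∀ χ ∈ V,
      (∀ x : I, φ x < ψ x) → (∀ x : I, ψ x < χ x) → (∀ x : I, φ x < χ x)) ∧
    -- trichotomy (linearity)
    (∀ φ ∈ V, ∀ ψ ∈ V, (∀ x : I, φ x < ψ x) ∨ φ = ψ ∨ (∀ x : I, ψ x < φ x)) ∧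
    -- left invariance
    (∀ φ ∈ V, ∀ ψ ∈ V, ∀ χ ∈ V,
      (∀ x : I, φ x < ψ x) → ∀ x : I, (χ * φ) x < (χ * ψ) x) ∧
    -- right invariance
    (∀ φ ∈ V, ∀ ψ ∈ V, ∀ χ ∈ V,
      (∀ x : I, φ x < ψ x) → ∀ x : I, (φ * χ) x < (ψ * χ) x) ∧
    -- Archimedean
    (∀ φ ∈ V, ∀ ψ ∈ V, (∀ x : I, (1 : Equiv.Perm I) x < φ x) → (∀ x : I, φ x < ψ x) →
      ∃ n : ℕ, ∀ x : I, ψ x < (φ ^ n) x) ∧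
    -- consequently, V is abelian
    (∀ φ ∈ V, ∀ ψ ∈ V, φ * ψ = ψ * φ) := by
  classical
  obtain ⟨x₀r, hx₀r⟩ := hIne
  set x₀ : I := ⟨x₀r, hx₀r⟩ with hx₀def
  -- sign lemma: every nonidentity element of V is pointwise above or below the identity
  have hsign : ∀ g ∈ V, g ≠ 1 → (∀ x : I, x < g x) ∨ (∀ x : I, g x < x) := by
    intro g hgV hg1
    by_contra hcon
    push_neg at hcon
    obtain ⟨⟨x₁, hx₁⟩, ⟨x₂, hx₂⟩⟩ := hcon
    have hfix := hfree g hgV hg1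
    have hx₁' : g x₁ < x₁ := lt_of_le_of_ne hx₁ (hfix x₁)
    have hx₂' : x₂ < g x₂ := lt_of_le_of_ne hx₂ (Ne.symm (hfix x₂))
    rcases lt_trichotomy x₂ x₁ with h | h | h
    · obtain ⟨s, hs⟩ := fix_of_cross hIconn g (hmono g hgV) x₂ x₁ h hx₂' hx₁'
      exact hfix s hs
    · rw [h] at hx₂'
      exact lt_irrefl _ (lt_trans hx₂' hx₁')
    · have hginv := permInv_strictMono g (hmono g hgV)
      have h1 : x₁ < g⁻¹ x₁ := by
        have h2 := hginv hx₁'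
        rwa [Equiv.Perm.inv_apply_self] at h2
      have h2 : g⁻¹ x₂ < x₂ := by
        have h3 := hginv hx₂'
        rwa [Equiv.Perm.inv_apply_self] at h3
      obtain ⟨s, hs⟩ := fix_of_cross hIconn g⁻¹ hginv x₁ x₂ h h1 h2
      have h4 := congrArg g hs
      rw [Equiv.Perm.apply_inv_self] at h4
      exact hfix s h4.symm
  -- trichotomy
  have htri : ∀ φ ∈ V, ∀ ψ ∈ V,
      (∀ x : I, φ x < ψ x) ∨ φ = ψ ∨ (∀ x : I, ψ x < φ x) := by
    intro φ hφ ψ hψ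
    by_cases h : φ = ψ
    · exact Or.inr (Or.inl h)
    have hgV : ψ⁻¹ * φ ∈ V := V.mul_mem (V.inv_mem hψ) hφ
    have hg1 : ψ⁻¹ * φ ≠ 1 := by
      intro hcon
      exact h (inv_mul_eq_one.mp hcon).symm
    rcases hsign _ hgV hg1 with hpos | hneg
    · right; right
      intro x
      have h1 : x < ψ⁻¹ (φ x) := hpos x
      have h2 := hmono ψ hψ h1
      rwa [Equiv.Perm.apply_inv_self] at h2
    · left
      intro x
      have h1 : ψ⁻¹ (φ x) < x := hneg x
      have h2 := hmono ψ hψ h1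
      rwa [Equiv.Perm.apply_inv_self] at h2
  -- comparison at a single point propagates to all points
  have hpoint_le : ∀ φ ∈ V, ∀ ψ ∈ V, ∀ x₁ : I, φ x₁ ≤ ψ x₁ → ∀ x : I, φ x ≤ ψ x := by
    intro φ hφ ψ hψ x₁ h x
    rcases htri φ hφ ψ hψ with h1 | h1 | h1
    · exact (h1 x).le
    · rw [h1]
    · exact absurd h (not_le.mpr (h1 x₁))
  have hpoint_lt : ∀ φ ∈ V, ∀ ψ ∈ V, ∀ x₁ : I, φ x₁ < ψ x₁ → ∀ x : I, φ x < ψ x := by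
    intro φ hφ ψ hψ x₁ h x
    rcases htri φ hφ ψ hψ with h1 | h1 | h1
    · exact h1 x
    · rw [h1] at h; exact absurd h (lt_irrefl _)
    · exact absurd h (not_lt.mpr (h1 x₁).le)
  -- unbounded orbits
  have hunbound_up : ∀ f ∈ V, (∀ x : I, x < f x) → ∀ y z : I,
      ∃ n : ℕ, (y : ℝ) < (((f ^ n) z : I) : ℝ) := by
    intro f hf hfpos y z
    by_contra hcon
    push_neg at hcon
    set u : ℕ → ℝ := fun n => (((f ^ n) z : I) : ℝ) with hu
    have hstep : ∀ n : ℕ, u n < u (n + 1) := by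
      intro n
      have h1 : (f ^ n) z < f ((f ^ n) z) := hfpos _
      have h2 : (f ^ (n + 1)) z = f ((f ^ n) z) := by
        rw [pow_succ', Equiv.Perm.mul_apply]
      calc u n < (((f ((f ^ n) z)) : I) : ℝ) := Subtype.coe_lt_coe.mpr h1
        _ = u (n + 1) := by rw [hu]; simp only [h2]
    have hmonou : Monotone u := monotone_nat_of_le_succ (fun n => (hstep n).le)
    have hbdd : BddAbove (Set.range u) := by
      refine ⟨(y : ℝ), ?_⟩
      rintro r ⟨n, rfl⟩
      exact hcon n
    set L : ℝ := ⨆ n, u n with hL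
    have hzL : (z : ℝ) ≤ L := by
      have h0 : u 0 ≤ L := le_ciSup hbdd 0
      have h0' : u 0 = (z : ℝ) := by simp [hu]
      rwa [h0'] at h0
    have hLy : L ≤ (y : ℝ) := ciSup_le hcon
    have hLI : L ∈ I := hIconn.out z.2 y.2 ⟨hzL, hLy⟩
    set S : I := ⟨L, hLI⟩ with hSdef
    have hunL : ∀ n, u n ≤ L := fun n => le_ciSup hbdd n
    have hup : L ≤ ((f S : I) : ℝ) := by
      refine ciSup_le (fun n => ?_)
      have h1 : (f ^ n) z ≤ S := hunL n
      have h2 : f ((f ^ n) z) ≤ f S := (hmono f hf).monotone h1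
      have h3 : u n ≤ u (n + 1) := (hstep n).le
      have h4 : u (n + 1) = ((f ((f ^ n) z) : I) : ℝ) := by
        rw [hu]; simp only [pow_succ', Equiv.Perm.mul_apply]
      rw [h4] at h3
      exact le_trans h3 (Subtype.coe_le_coe.mpr h2)
    have hfS : f S = S := by
      by_contra hne
      have hlt : S < f S := lt_of_le_of_ne hup (fun e => hne e.symm)
      set w : I := f⁻¹ S with hw
      have hwS : w < S := by
        have h1 : f w = S := Equiv.Perm.apply_inv_self f S
        have h2 : f w < f S := by rw [h1]; exact hlt
        exact (hmono f hf).lt_iff_lt.mp h2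
      obtain ⟨n, hn⟩ := exists_lt_of_lt_ciSup (Subtype.coe_lt_coe.mpr hwS)
      have h1 : w < (f ^ n) z := hn
      have h2 : f w < f ((f ^ n) z) := hmono f hf h1
      have h3 : (S : ℝ) < u (n + 1) := by
        have h4 : f w = S := Equiv.Perm.apply_inv_self f S
        rw [h4] at h2
        have h5 : u (n + 1) = ((f ((f ^ n) z) : I) : ℝ) := by
          rw [hu]; simp only [pow_succ', Equiv.Perm.mul_apply]
        rw [h5]
        exact Subtype.coe_lt_coe.mpr h2
      exact absurd (hunL (n + 1)) (not_le.mpr h3)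
    have hf1 : f ≠ 1 := by
      intro h1
      have := hfpos z
      rw [h1] at this
      exact lt_irrefl _ this
    exact hfree f hf hf1 S hfS
  have hunbound_down : ∀ f ∈ V, (∀ x : I, f x < x) → ∀ y z : I,
      ∃ n : ℕ, (((f ^ n) z : I) : ℝ) < (y : ℝ) := by
    intro f hf hfneg y z
    by_contra hcon
    push_neg at hcon
    set u : ℕ → ℝ := fun n => (((f ^ n) z : I) : ℝ) with hu
    have hstep : ∀ n : ℕ, u (n + 1) < u n := by
      intro n
      have h1 : f ((f ^ n) z) < (f ^ n) z := hfneg _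
      have h2 : u (n + 1) = ((f ((f ^ n) z) : I) : ℝ) := by
        rw [hu]; simp only [pow_succ', Equiv.Perm.mul_apply]
      rw [h2]
      exact Subtype.coe_lt_coe.mpr h1
    have hbdd : BddBelow (Set.range u) := by
      refine ⟨(y : ℝ), ?_⟩
      rintro r ⟨n, rfl⟩
      exact hcon n
    set L : ℝ := ⨅ n, u n with hL
    have hzL : L ≤ (z : ℝ) := by
      have h0 : L ≤ u 0 := ciInf_le hbdd 0
      have h0' : u 0 = (z : ℝ) := by simp [hu]
      rwa [h0'] at h0
    have hLy : (y : ℝ) ≤ L := le_ciInf hcon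
    have hLI : L ∈ I := hIconn.out y.2 z.2 ⟨hLy, hzL⟩
    set S : I := ⟨L, hLI⟩ with hSdef
    have hunL : ∀ n, L ≤ u n := fun n => ciInf_le hbdd n
    have hup : ((f S : I) : ℝ) ≤ L := by
      refine le_ciInf (fun n => ?_)
      have h1 : S ≤ (f ^ n) z := hunL n
      have h2 : f S ≤ f ((f ^ n) z) := (hmono f hf).monotone h1
      have h3 : u (n + 1) ≤ u n := (hstep n).le
      have h4 : u (n + 1) = ((f ((f ^ n) z) : I) : ℝ) := by
        rw [hu]; simp only [pow_succ', Equiv.Perm.mul_apply]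
      rw [h4] at h3
      exact le_trans (Subtype.coe_le_coe.mpr h2) h3
    have hfS : f S = S := by
      by_contra hne
      have hlt : f S < S := lt_of_le_of_ne hup (fun e => hne e)
      set w : I := f⁻¹ S with hw
      have hwS : S < w := by
        have h1 : f w = S := Equiv.Perm.apply_inv_self f S
        have h2 : f S < f w := by rw [h1]; exact hlt
        exact (hmono f hf).lt_iff_lt.mp h2
      obtain ⟨n, hn⟩ := exists_lt_of_ciInf_lt (Subtype.coe_lt_coe.mpr hwS)
      have h1 : (f ^ n) z < w := hn
      have h2 : f ((f ^ n) z) < f w := hmono f hf h1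
      have h3 : u (n + 1) < (S : ℝ) := by
        have h4 : f w = S := Equiv.Perm.apply_inv_self f S
        rw [h4] at h2
        have h5 : u (n + 1) = ((f ((f ^ n) z) : I) : ℝ) := by
          rw [hu]; simp only [pow_succ', Equiv.Perm.mul_apply]
        rw [h5]
        exact Subtype.coe_lt_coe.mpr h2
      exact absurd (hunL (n + 1)) (not_le.mpr h3)
    have hf1 : f ≠ 1 := by
      intro h1
      have := hfneg z
      rw [h1] at this
      exact lt_irrefl _ this
    exact hfree f hf hf1 S hfS
  -- strict monotonicity in the (integer) exponent
  have hzlt : ∀ d ∈ V, (∀ x : I, x < d x) → ∀ m₁ m₂ : ℤ, m₁ < m₂ →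
      ∀ x : I, (d ^ m₁) x < (d ^ m₂) x := by
    intro d hd hdpos m₁ m₂ hm x
    have hnat : ∀ (k : ℕ) (t : I), t < (d ^ (k + 1)) t := by
      intro k
      induction k with
      | zero => intro t; simpa using hdpos t
      | succ n ih =>
        intro t
        have h1 := ih t
        have h2 : (d ^ (n + 2)) t = d ((d ^ (n + 1)) t) := by
          rw [pow_succ']
          rfl
        rw [h2]
        exact lt_trans h1 (hdpos _)
    obtain ⟨k, hk'⟩ : ∃ k : ℕ, (k : ℤ) = m₂ - m₁ :=
      ⟨(m₂ - m₁).toNat, Int.toNat_of_nonneg (by omega)⟩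
    obtain ⟨j, hj⟩ : ∃ j : ℕ, k = j + 1 := ⟨k - 1, by omega⟩
    have h1 : (d ^ m₂) x = (d ^ m₁) ((d ^ (k : ℤ)) x) := by
      have he : m₂ = m₁ + (k : ℤ) := by omega
      rw [← Equiv.Perm.mul_apply, ← zpow_add, ← he]
    have h2 : x < (d ^ (k : ℤ)) x := by
      rw [zpow_natCast, hj]
      exact hnat j x
    rw [h1]
    exact hmono _ (V.zpow_mem hd m₁) h2
  -- existence of integer "digits":  d^m ≼ a ≺ d^(m+1)
  have hq : ∀ d ∈ V, (∀ x : I, x < d x) → ∀ a ∈ V, ∃ m : ℤ,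
      (∀ x : I, (d ^ m) x ≤ a x) ∧ (∀ x : I, a x < (d ^ (m + 1)) x) := by
    intro d hd hdpos a ha
    have hdinv : ∀ x : I, d⁻¹ x < x := by
      intro x
      have h1 := hdpos (d⁻¹ x)
      rwa [Equiv.Perm.apply_inv_self] at h1
    obtain ⟨n₁, hn₁⟩ := hunbound_down d⁻¹ (V.inv_mem hd) hdinv (a x₀) x₀
    obtain ⟨n₂, hn₂⟩ := hunbound_up d hd hdpos (a x₀) x₀
    have hinh : ∃ m : ℤ, (d ^ m) x₀ ≤ a x₀ := by
      refine ⟨-(n₁ : ℤ), ?_⟩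
      have h1 : d ^ (-(n₁ : ℤ)) = (d⁻¹) ^ n₁ := by
        rw [zpow_neg, zpow_natCast, inv_pow]
      rw [h1]
      exact (Subtype.coe_le_coe.mp hn₁.le)
    have hbddM : ∀ m : ℤ, (d ^ m) x₀ ≤ a x₀ → m ≤ (n₂ : ℤ) := by
      intro m hm
      by_contra hcon
      push_neg at hcon
      have h1 : (d ^ (n₂ : ℤ)) x₀ < (d ^ m) x₀ := hzlt d hd hdpos _ _ hcon x₀
      have h2 : (a x₀ : ℝ) < (((d ^ (n₂ : ℤ)) x₀ : I) : ℝ) := by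
        have : d ^ (n₂ : ℤ) = d ^ n₂ := zpow_natCast d n₂
        rw [this]
        exact hn₂
      have h3 : ((d ^ (n₂ : ℤ)) x₀ : I) < a x₀ := lt_of_lt_of_le h1 hm
      exact absurd h2 (not_lt.mpr (Subtype.coe_le_coe.mpr h3.le))
    obtain ⟨m, hm, hmax⟩ := Int.exists_greatest_of_bdd ⟨(n₂ : ℤ), fun z hz => hbddM z hz⟩ hinh
    have hm2 : a x₀ < (d ^ (m + 1)) x₀ := by
      by_contra hcon
      push_neg at hcon
      have := hmax (m + 1) hcon
      omega
    exact ⟨m, hpoint_le _ (V.zpow_mem hd m) a ha x₀ hm,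
      hpoint_lt a ha _ (V.zpow_mem hd (m + 1)) x₀ hm2⟩
  -- key commutativity lemma
  have hcommaux : ∀ a ∈ V, ∀ b ∈ V,
      (∀ x : I, x < ((a * b) * (b * a)⁻¹) x) → False := by
    intro a ha b hb hc
    set c : Equiv.Perm I := (a * b) * (b * a)⁻¹ with hcdef
    have hcV : c ∈ V := V.mul_mem (V.mul_mem ha hb) (V.inv_mem (V.mul_mem hb ha))
    -- Claim 1: for every positive d in V, c ≺ d * d
    have claim1 : ∀ d ∈ V, (∀ x : I, x < d x) → ∀ x : I, c x < (d * d) x := by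
      intro d hd hdpos
      obtain ⟨m, hm1, hm2⟩ := hq d hd hdpos a ha
      obtain ⟨n, hn1, hn2⟩ := hq d hd hdpos b hb
      intro x
      obtain ⟨y, hy⟩ : ∃ y : I, (b * a) y = x := ⟨(b * a)⁻¹ x, Equiv.Perm.apply_inv_self _ _⟩
      have hab_up : (a * b) y < (d ^ (m + n + 2)) y := by
        have h1 : b y < (d ^ (n + 1)) y := hn2 y
        have h2 : a (b y) < a ((d ^ (n + 1)) y) := hmono a ha h1
        have h3 : a ((d ^ (n + 1)) y) < (d ^ (m + 1)) ((d ^ (n + 1)) y) := hm2 _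
        have h4 : (d ^ (m + 1)) ((d ^ (n + 1)) y) = (d ^ (m + n + 2)) y := by
          rw [← Equiv.Perm.mul_apply, ← zpow_add]
          congr 1
          ring
        rw [h4] at h3
        exact lt_trans h2 h3
      have hba_lo : (d ^ (m + n)) y ≤ (b * a) y := by
        have h1 : (d ^ m) y ≤ a y := hm1 y
        have h2 : (d ^ n) ((d ^ m) y) ≤ (d ^ n) (a y) :=
          (hmono _ (V.zpow_mem hd n)).monotone h1
        have h3 : (d ^ n) (a y) ≤ b (a y) := hn1 _
        have h4 : (d ^ (m + n)) y = (d ^ n) ((d ^ m) y) := by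
          rw [← Equiv.Perm.mul_apply, ← zpow_add]
          congr 1
          ring
        rw [h4]
        exact le_trans h2 h3
      have h5 : (d ^ (m + n)) y ≤ x := hy ▸ hba_lo
      have h7 : y ≤ (d ^ (-(m + n))) x := by
        have h8 := (hmono _ (V.zpow_mem hd (-(m + n)))).monotone h5
        have h9 : (d ^ (-(m + n))) ((d ^ (m + n)) y) = y := by
          rw [← Equiv.Perm.mul_apply, ← zpow_add]
          have he : -(m + n) + (m + n) = (0 : ℤ) := by ring
          rw [he, zpow_zero]
          rfl
        rwa [h9] at h8
      have h10 : c x = (a * b) y := by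
        rw [hcdef, ← hy]
        simp [Equiv.Perm.mul_apply, Equiv.Perm.inv_apply_self]
      rw [h10]
      calc (a * b) y < (d ^ (m + n + 2)) y := hab_up
        _ ≤ (d ^ (m + n + 2)) ((d ^ (-(m + n))) x) :=
            (hmono _ (V.zpow_mem hd (m + n + 2))).monotone h7
        _ = (d * d) x := by
            rw [← Equiv.Perm.mul_apply, ← zpow_add]
            have he : m + n + 2 + -(m + n) = (2 : ℤ) := by ring
            rw [he, zpow_two]
    by_cases hmin : ∃ g ∈ V, (∀ x : I, x < g x) ∧ (∀ x : I, g x < c x)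
    · obtain ⟨d, hdV, hdpos, hdc⟩ := hmin
      have h1 : ∀ x : I, c x < (d * d) x := claim1 d hdV hdpos
      set e : Equiv.Perm I := c * d⁻¹ with hedef
      have heV : e ∈ V := V.mul_mem hcV (V.inv_mem hdV)
      have hepos : ∀ x : I, x < e x := by
        intro x
        have h2 := hdc (d⁻¹ x)
        rw [Equiv.Perm.apply_inv_self] at h2
        exact h2
      have h2 : ∀ x : I, c x < (e * e) x := claim1 e heV hepos
      have h3 : ∀ x : I, d x < c (d⁻¹ x) := by
        intro x
        have h4 := h2 x
        have h5 : (e * e) x = c (d⁻¹ (c (d⁻¹ x))) := rfl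
        rw [h5] at h4
        have h6 : x < d⁻¹ (c (d⁻¹ x)) := (hmono c hcV).lt_iff_lt.mp h4
        have h7 := hmono d hdV h6
        rwa [Equiv.Perm.apply_inv_self] at h7
      have h8 : ∀ x : I, (d * d) x < c x := by
        intro x
        have h9 := h3 (d x)
        rw [Equiv.Perm.inv_apply_self] at h9
        exact h9
      exact lt_irrefl _ (lt_trans (h1 x₀) (h8 x₀))
    · push_neg at hmin
      have hminle : ∀ g ∈ V, (∀ x : I, x < g x) → ∀ x : I, c x ≤ g x := by
        intro g hg hgpos
        obtain ⟨x₁, hx₁⟩ := hmin g hg hgpos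
        exact hpoint_le c hcV g hg x₁ hx₁
      have hexp : ∀ g ∈ V, ∃ m : ℤ, g = c ^ m := by
        intro g hg
        obtain ⟨m, hm1, hm2⟩ := hq c hcV hc g hg
        refine ⟨m, ?_⟩
        have hαV : c ^ (-m) * g ∈ V := V.mul_mem (V.zpow_mem hcV (-m)) hg
        have hα1 : ∀ x : I, x ≤ (c ^ (-m) * g) x := by
          intro x
          have h1 := (hmono _ (V.zpow_mem hcV (-m))).monotone (hm1 x)
          have h2 : (c ^ (-m)) ((c ^ m) x) = x := by
            rw [← Equiv.Perm.mul_apply, ← zpow_add]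
            simp
          rw [h2] at h1
          exact h1
        have hα2 : ∀ x : I, (c ^ (-m) * g) x < c x := by
          intro x
          have h1 := hmono _ (V.zpow_mem hcV (-m)) (hm2 x)
          have h2 : (c ^ (-m)) ((c ^ (m + 1)) x) = c x := by
            rw [← Equiv.Perm.mul_apply, ← zpow_add]
            have h3 : -m + (m + 1) = (1 : ℤ) := by ring
            rw [h3, zpow_one]
          rw [h2] at h1
          exact h1
        have hα_eq : c ^ (-m) * g = 1 := by
          by_contra hne
          rcases hsign _ hαV hne with hpos | hneg
          · have h1 := hminle _ hαV hpos x₀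
            exact absurd (hα2 x₀) (not_lt.mpr h1)
          · exact absurd (hα1 x₀) (not_le.mpr (hneg x₀))
        have h1 : g = (c ^ (-m))⁻¹ := eq_inv_of_mul_eq_one_right hα_eq
        rw [h1, zpow_neg, inv_inv]
      obtain ⟨m, hma⟩ := hexp a ha
      obtain ⟨n, hnb⟩ := hexp b hb
      have hcomm : a * b = b * a := by
        rw [hma, hnb, ← zpow_add, ← zpow_add, add_comm]
      have hc1 : c = 1 := by
        rw [hcdef, hcomm, mul_inv_cancel]
      have h2 := hc x₀
      rw [hc1] at h2
      exact lt_irrefl _ h2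
  refine ⟨?_, ?_, ?_, ?_, ?_, ?_, ?_⟩
  · intro φ _ h
    exact lt_irrefl _ (h x₀)
  · intro φ _ ψ _ χ _ h1 h2 x
    exact lt_trans (h1 x) (h2 x)
  · exact htri
  · intro φ _ ψ _ χ hχ h x
    have h1 : χ (φ x) < χ (ψ x) := hmono χ hχ (h x)
    simpa [Equiv.Perm.mul_apply] using h1
  · intro φ _ ψ _ χ _ h x
    have h1 : φ (χ x) < ψ (χ x) := h (χ x)
    simpa [Equiv.Perm.mul_apply] using h1
  · intro φ hφ ψ hψ h1 h2
    have hφpos : ∀ x : I, x < φ x := by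
      intro x
      simpa using h1 x
    by_contra hcon
    push_neg at hcon
    have hall : ∀ n : ℕ, ∀ x : I, (φ ^ n) x ≤ ψ x := by
      intro n
      obtain ⟨x₁, hx₁⟩ := hcon n
      exact hpoint_le _ (V.pow_mem hφ n) ψ hψ x₁ hx₁
    obtain ⟨n, hn⟩ := hunbound_up φ hφ hφpos (ψ x₀) x₀
    exact absurd hn (not_lt.mpr (Subtype.coe_le_coe.mpr (hall n x₀)))
  · intro φ hφ ψ hψ
    by_contra hne
    have hk1 : (φ * ψ) * (ψ * φ)⁻¹ ≠ 1 := by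
      intro hcon
      exact hne (mul_inv_eq_one.mp hcon)
    have hkV : (φ * ψ) * (ψ * φ)⁻¹ ∈ V :=
      V.mul_mem (V.mul_mem hφ hψ) (V.inv_mem (V.mul_mem hψ hφ))
    rcases hsign _ hkV hk1 with hpos | hneg
    · exact hcommaux φ hφ ψ hψ hpos
    · refine hcommaux ψ hψ φ hφ ?_
      intro x
      have h1 := hneg (((φ * ψ) * (ψ * φ)⁻¹)⁻¹ x)
      rw [Equiv.Perm.apply_inv_self] at h1
      have h2 : ((φ * ψ) * (ψ * φ)⁻¹)⁻¹ = (ψ * φ) * (φ * ψ)⁻¹ := by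
        rw [mul_inv_rev, inv_inv]
      rw [h2] at h1
      exact h1
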